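/- For ν > 0 consider the tempered distribution on ℝ² given by the locally integrable function ξ ↦ 1/(|ξ|² + ν²), and let δ be the Dirac delta at the origin. Then 1/(|ξ|² + ν²) − 2π log(1/ν) δ converges in the space of tempered distributions S′(ℝ²) as ν → 0⁺; that is, for every Schwartz function φ on ℝ², the limit lim_{ν→0⁺} [ ∫_{ℝ²} φ(ξ)/(|ξ|² + ν²) dξ − 2π log(1/ν) φ(0) ] exists. -/

import Mathlib

open MeasureTheory Set Metric Filter

private lemma aux_vol_ball_two :
    (volume (Metric.ball (0 : EuclideanSpace ℝ (Fin 2)) 1)).toReal = Real.pi := by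
  rw [EuclideanSpace.volume_ball]
  rw [Fintype.card_fin]
  norm_num [Real.Gamma_two, Real.sq_sqrt Real.pi_nonneg, ENNReal.toReal_ofReal Real.pi_nonneg]

private lemma aux_interval_int (ν : ℝ) (hν : 0 < ν) :
    ∫ x in (0:ℝ)..1, x * (x ^ 2 + ν ^ 2)⁻¹
      = (Real.log (1 + ν ^ 2) - Real.log (ν ^ 2)) / 2 := by
  have hpos : ∀ x : ℝ, 0 < x ^ 2 + ν ^ 2 := fun x => by positivity
  have hder : ∀ x ∈ Set.uIcc (0:ℝ) 1, HasDerivAt (fun x => Real.log (x ^ 2 + ν ^ 2) / 2)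
      (x * (x ^ 2 + ν ^ 2)⁻¹) x := by
    intro x _
    have h1 : HasDerivAt (fun x : ℝ => x ^ 2 + ν ^ 2) (2 * x) x := by
      simpa using (hasDerivAt_pow 2 x).add_const (ν ^ 2)
    have h2 := (Real.hasDerivAt_log (hpos x).ne').comp x h1
    have h3 := h2.div_const 2
    refine h3.congr_deriv ?_
    ring
  have hint : IntervalIntegrable (fun x : ℝ => x * (x ^ 2 + ν ^ 2)⁻¹) volume 0 1 := by
    apply Continuous.intervalIntegrable
    exact continuous_id.mul ((continuous_pow 2 |>.add continuous_const).inv₀ fun x => (hpos x).ne')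
  rw [intervalIntegral.integral_eq_sub_of_hasDerivAt hder hint]
  norm_num
  ring

private lemma aux_ball_integral (ν : ℝ) (hν : 0 < ν) :
    ∫ ξ : EuclideanSpace ℝ (Fin 2) in Metric.closedBall 0 1, (‖ξ‖ ^ 2 + ν ^ 2)⁻¹
      = Real.pi * (Real.log (1 + ν ^ 2) - Real.log (ν ^ 2)) := by
  set f : ℝ → ℝ := Set.indicator (Set.Iic 1) (fun r => (r ^ 2 + ν ^ 2)⁻¹) with hf
  have key : ∫ ξ : EuclideanSpace ℝ (Fin 2) in Metric.closedBall 0 1, (‖ξ‖ ^ 2 + ν ^ 2)⁻¹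
      = ∫ ξ : EuclideanSpace ℝ (Fin 2), f ‖ξ‖ := by
    rw [← integral_indicator measurableSet_closedBall]
    congr 1
    funext ξ
    rw [hf]
    by_cases h : ‖ξ‖ ≤ 1
    · rw [Set.indicator_of_mem (mem_closedBall_zero_iff.2 h),
        Set.indicator_of_mem (Set.mem_Iic.2 h)]
    · rw [Set.indicator_of_notMem (fun hc => h (mem_closedBall_zero_iff.1 hc)),
        Set.indicator_of_notMem (fun hc => h (Set.mem_Iic.1 hc))]
  rw [key, integral_fun_norm_addHaar volume f]
  have hdim : Module.finrank ℝ (EuclideanSpace ℝ (Fin 2)) = 2 := by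
    simp [finrank_euclideanSpace]
  rw [hdim, measureReal_def, aux_vol_ball_two]
  have : ∫ y in Set.Ioi (0:ℝ), y ^ (2 - 1) • f y
      = ∫ x in (0:ℝ)..1, x * (x ^ 2 + ν ^ 2)⁻¹ := by
    have h1 : ∀ y : ℝ, y ^ (2 - 1) • f y
        = Set.indicator (Set.Iic 1) (fun r => r * (r ^ 2 + ν ^ 2)⁻¹) y := by
      intro y
      simp only [hf, Set.indicator_apply, pow_one, smul_eq_mul]
      split <;> simp
    simp_rw [h1]
    rw [setIntegral_indicator measurableSet_Iic, Set.Ioi_inter_Iic,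
      ← intervalIntegral.integral_of_le zero_le_one]
  rw [this, aux_interval_int ν hν]
  rw [smul_eq_mul]
  ring

private lemma aux_taylor_bound (φ : SchwartzMap (EuclideanSpace ℝ (Fin 2)) ℝ) :
    ∃ C : ℝ, 0 ≤ C ∧ ∀ x, ‖φ x - (φ 0 + fderiv ℝ φ 0 x)‖ ≤ C * ‖x‖ ^ 2 := by
  set φ₁ := SchwartzMap.fderivCLM ℝ _ _ φ with hφ₁
  set φ₂ := SchwartzMap.fderivCLM ℝ _ _ φ₁ with hφ₂
  set C := SchwartzMap.seminorm ℝ 0 0 φ₂ with hC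
  have hC0 : 0 ≤ C := apply_nonneg _ _
  refine ⟨C, hC0, fun x => ?_⟩
  have hL : ∀ y : EuclideanSpace ℝ (Fin 2), ‖φ₁ y - φ₁ 0‖ ≤ C * ‖y‖ := by
    intro y
    have := Convex.norm_image_sub_le_of_norm_fderiv_le
      (s := (Set.univ : Set (EuclideanSpace ℝ (Fin 2))))
      (f := ⇑φ₁) (C := C)
      (fun z _ => φ₁.differentiableAt)
      (fun z _ => by
        rw [← SchwartzMap.fderivCLM_apply (𝕜 := ℝ)]
        exact SchwartzMap.norm_le_seminorm ℝ φ₂ z)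
      convex_univ (Set.mem_univ 0) (Set.mem_univ y)
    simpa using this
  set L := fderiv ℝ φ 0 with hLdef
  have hg : ∀ y : EuclideanSpace ℝ (Fin 2),
      HasFDerivAt (fun z => φ z - (φ 0 + L z)) (φ₁ y - L) y := by
    intro y
    have h1 : HasFDerivAt φ (φ₁ y) y := by
      rw [SchwartzMap.fderivCLM_apply]
      exact (φ.differentiable y).hasFDerivAt
    exact h1.sub ((L.hasFDerivAt).const_add (φ 0))
  have key := Convex.norm_image_sub_le_of_norm_hasFDerivWithin_le
    (f := fun z => φ z - (φ 0 + L z)) (f' := fun y => φ₁ y - L)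
    (s := Metric.closedBall (0 : EuclideanSpace ℝ (Fin 2)) ‖x‖)
    (C := C * ‖x‖)
    (fun y _ => (hg y).hasFDerivWithinAt)
    (fun y hy => by
      have h2 : ‖φ₁ y - L‖ ≤ C * ‖y‖ := by
        rw [hLdef, ← SchwartzMap.fderivCLM_apply (𝕜 := ℝ)]
        exact hL y
      exact h2.trans (by
        have := mem_closedBall_zero_iff.1 hy
        nlinarith [norm_nonneg y]))
    (convex_closedBall _ _)
    (mem_closedBall_self (norm_nonneg x)) (mem_closedBall_zero_iff.2 le_rfl)
  simp only [map_zero, sub_zero, add_zero, sub_self] at key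
  calc ‖φ x - (φ 0 + L x)‖ ≤ C * ‖x‖ * ‖x‖ := key
    _ = C * ‖x‖ ^ 2 := by ring

private lemma aux_odd_integral (ν : ℝ) (L : EuclideanSpace ℝ (Fin 2) →L[ℝ] ℝ) :
    ∫ ξ : EuclideanSpace ℝ (Fin 2),
      Set.indicator (Metric.closedBall 0 1) (fun ξ => L ξ / (‖ξ‖ ^ 2 + ν ^ 2)) ξ = 0 := by
  set G : EuclideanSpace ℝ (Fin 2) → ℝ :=
    Set.indicator (Metric.closedBall 0 1) (fun ξ => L ξ / (‖ξ‖ ^ 2 + ν ^ 2)) with hG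
  have hodd : ∀ ξ, G (-ξ) = - G ξ := by
    intro ξ
    rw [hG]
    by_cases h : ξ ∈ Metric.closedBall (0 : EuclideanSpace ℝ (Fin 2)) 1
    · have h' : -ξ ∈ Metric.closedBall (0 : EuclideanSpace ℝ (Fin 2)) 1 := by
        rw [mem_closedBall_zero_iff] at h ⊢; simpa using h
      rw [Set.indicator_of_mem h', Set.indicator_of_mem h]
      simp [neg_div]
    · have h' : -ξ ∉ Metric.closedBall (0 : EuclideanSpace ℝ (Fin 2)) 1 := by
        rw [mem_closedBall_zero_iff] at h ⊢; simpa using h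
      rw [Set.indicator_of_notMem h', Set.indicator_of_notMem h]
      simp
  have h1 : ∫ ξ, G (-ξ) = ∫ ξ, G ξ := integral_neg_eq_self G volume
  have h2 : ∫ ξ, G (-ξ) = - ∫ ξ, G ξ := by
    simp_rw [hodd]
    exact integral_neg G
  linarith [h1, h2]

private lemma aux_integrable_phi (φ : SchwartzMap (EuclideanSpace ℝ (Fin 2)) ℝ) (ν : ℝ)
    (hν : 0 < ν) :
    Integrable (fun ξ : EuclideanSpace ℝ (Fin 2) => φ ξ / (‖ξ‖ ^ 2 + ν ^ 2)) := by
  have hd : ∀ ξ : EuclideanSpace ℝ (Fin 2), 0 < ‖ξ‖ ^ 2 + ν ^ 2 := fun ξ => by positivity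
  apply Integrable.mono' ((φ.integrable (μ := volume)).norm.mul_const (ν ^ 2)⁻¹)
  · exact (φ.continuous.div ((continuous_norm.pow 2).add continuous_const)
      fun ξ => (hd ξ).ne').aestronglyMeasurable
  · refine Eventually.of_forall fun ξ => ?_
    rw [norm_div, Real.norm_eq_abs (‖ξ‖ ^ 2 + ν ^ 2), abs_of_pos (hd ξ), ← div_eq_mul_inv]
    exact div_le_div_of_nonneg_left (norm_nonneg _) (by positivity)
      (le_add_of_nonneg_left (by positivity))

local notation "E2" => EuclideanSpace ℝ (Fin 2)

private noncomputable def psiF (φ : SchwartzMap (EuclideanSpace ℝ (Fin 2)) ℝ) :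
    EuclideanSpace ℝ (Fin 2) → ℝ :=
  fun ξ => φ 0 + fderiv ℝ φ 0 ξ

private lemma psiF_cont (φ : SchwartzMap E2 ℝ) : Continuous (psiF φ) :=
  continuous_const.add (fderiv ℝ φ 0).continuous

private noncomputable def gF (φ : SchwartzMap (EuclideanSpace ℝ (Fin 2)) ℝ) (ν : ℝ)
    (ξ : EuclideanSpace ℝ (Fin 2)) : ℝ :=
  (φ ξ - Set.indicator (Metric.closedBall 0 1) (psiF φ) ξ) / (‖ξ‖ ^ 2 + ν ^ 2)

private lemma gF_meas (φ : SchwartzMap E2 ℝ) (ν : ℝ) :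
    AEStronglyMeasurable (gF φ ν) volume := by
  have : Measurable (gF φ ν) :=
    (φ.continuous.measurable.sub
        ((psiF_cont φ).measurable.indicator measurableSet_closedBall)).div
      (((continuous_norm.pow 2).add continuous_const).measurable)
  exact this.aestronglyMeasurable

private lemma gF_key (φ : SchwartzMap E2 ℝ) (ν : ℝ) (hν : 0 < ν) :
    ∫ ξ, gF φ ν ξ = (∫ ξ, φ ξ / (‖ξ‖ ^ 2 + ν ^ 2))
      - φ 0 * (Real.pi * (Real.log (1 + ν ^ 2) - Real.log (ν ^ 2))) := by
  have hdne : ∀ ξ : E2, (‖ξ‖ ^ 2 + ν ^ 2) ≠ 0 := fun ξ => by positivity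
  set B : Set E2 := Metric.closedBall 0 1 with hB
  have hiφ := aux_integrable_phi φ ν hν
  have hiψ : Integrable (fun ξ : E2 =>
      Set.indicator B (fun ξ => psiF φ ξ / (‖ξ‖ ^ 2 + ν ^ 2)) ξ) := by
    apply IntegrableOn.integrable_indicator _ measurableSet_closedBall
    exact ContinuousOn.integrableOn_compact (isCompact_closedBall _ _)
      (((psiF_cont φ).div ((continuous_norm.pow 2).add continuous_const) hdne).continuousOn)
  have hrw : ∀ ξ, gF φ ν ξ = φ ξ / (‖ξ‖ ^ 2 + ν ^ 2)
      - Set.indicator B (fun ξ => psiF φ ξ / (‖ξ‖ ^ 2 + ν ^ 2)) ξ := by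
    intro ξ
    rw [gF, sub_div]
    congr 1
    by_cases hmem : ξ ∈ B
    · rw [Set.indicator_of_mem hmem, Set.indicator_of_mem hmem]
    · rw [Set.indicator_of_notMem hmem, Set.indicator_of_notMem hmem, zero_div]
  have hsplit : ∫ ξ, gF φ ν ξ = (∫ ξ, φ ξ / (‖ξ‖ ^ 2 + ν ^ 2))
      - ∫ ξ, Set.indicator B (fun ξ => psiF φ ξ / (‖ξ‖ ^ 2 + ν ^ 2)) ξ := by
    simp_rw [hrw]
    exact integral_sub hiφ hiψ
  have hion1 : IntegrableOn (fun ξ : E2 => φ 0 / (‖ξ‖ ^ 2 + ν ^ 2)) B :=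
    ContinuousOn.integrableOn_compact (isCompact_closedBall _ _)
      ((continuous_const.div ((continuous_norm.pow 2).add continuous_const)
        hdne).continuousOn)
  have hion2 : IntegrableOn (fun ξ : E2 => fderiv ℝ φ 0 ξ / (‖ξ‖ ^ 2 + ν ^ 2)) B :=
    ContinuousOn.integrableOn_compact (isCompact_closedBall _ _)
      (((fderiv ℝ φ 0).continuous.div ((continuous_norm.pow 2).add continuous_const)
        hdne).continuousOn)
  have hψval : ∫ ξ, Set.indicator B (fun ξ => psiF φ ξ / (‖ξ‖ ^ 2 + ν ^ 2)) ξ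
      = φ 0 * (Real.pi * (Real.log (1 + ν ^ 2) - Real.log (ν ^ 2))) := by
    rw [integral_indicator measurableSet_closedBall]
    have hsum : ∀ ξ : E2, psiF φ ξ / (‖ξ‖ ^ 2 + ν ^ 2)
        = φ 0 / (‖ξ‖ ^ 2 + ν ^ 2) + fderiv ℝ φ 0 ξ / (‖ξ‖ ^ 2 + ν ^ 2) := by
      intro ξ
      rw [psiF, add_div]
    simp_rw [hsum]
    rw [integral_add hion1 hion2]
    have hz : ∫ ξ in B, fderiv ℝ φ 0 ξ / (‖ξ‖ ^ 2 + ν ^ 2) = 0 := by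
      rw [← integral_indicator measurableSet_closedBall]
      exact aux_odd_integral ν (fderiv ℝ φ 0)
    rw [hz, add_zero]
    have hc1 : ∫ ξ in B, φ 0 / (‖ξ‖ ^ 2 + ν ^ 2)
        = φ 0 * ∫ ξ in B, (‖ξ‖ ^ 2 + ν ^ 2)⁻¹ := by
      simp_rw [div_eq_mul_inv]
      exact integral_const_mul (φ 0) _
    rw [hc1, hB, aux_ball_integral ν hν]
  rw [hsplit, hψval]
private lemma gF_bound (φ : SchwartzMap E2 ℝ) :
    ∃ h : EuclideanSpace ℝ (Fin 2) → ℝ, Integrable h ∧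
      ∀ ν : ℝ, 0 < ν → ∀ ξ, ‖gF φ ν ξ‖ ≤ h ξ := by
  obtain ⟨C₂, hC₂0, hC₂⟩ := aux_taylor_bound φ
  set C₃ : ℝ := SchwartzMap.seminorm ℝ 1 0 φ with hC₃
  have hC₃0 : 0 ≤ C₃ := apply_nonneg _ _
  refine ⟨fun ξ => Set.indicator (Metric.closedBall 0 1) (fun _ => C₂) ξ
      + 8 * C₃ * (1 + ‖ξ‖) ^ (-(3:ℝ)), ?_, ?_⟩
  · apply Integrable.add
    · exact (integrableOn_const measure_closedBall_lt_top.ne).integrable_indicator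
        measurableSet_closedBall
    · exact (integrable_one_add_norm (μ := volume)
        (by norm_num [finrank_euclideanSpace] :
          (Module.finrank ℝ (EuclideanSpace ℝ (Fin 2)) : ℝ) < 3)).const_mul _
  · intro ν hν ξ
    have hd : 0 < ‖ξ‖ ^ 2 + ν ^ 2 := by positivity
    by_cases hmem : ξ ∈ Metric.closedBall (0 : EuclideanSpace ℝ (Fin 2)) 1
    · have h1 : gF φ ν ξ = (φ ξ - psiF φ ξ) / (‖ξ‖ ^ 2 + ν ^ 2) := by
        rw [gF, Set.indicator_of_mem hmem]
      have h2 : ‖gF φ ν ξ‖ ≤ C₂ := by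
        rw [h1, norm_div, Real.norm_eq_abs (‖ξ‖ ^ 2 + ν ^ 2), abs_of_pos hd]
        rw [div_le_iff₀ hd]
        calc ‖φ ξ - psiF φ ξ‖ ≤ C₂ * ‖ξ‖ ^ 2 := hC₂ ξ
          _ ≤ C₂ * (‖ξ‖ ^ 2 + ν ^ 2) := by nlinarith
      have h4 : (0:ℝ) ≤ 8 * C₃ * (1 + ‖ξ‖) ^ (-(3:ℝ)) := by positivity
      beta_reduce
      rw [Set.indicator_of_mem hmem]
      linarith
    · have hn : 1 < ‖ξ‖ := by
        rw [mem_closedBall_zero_iff, not_le] at hmem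
        exact hmem
      have hn0 : 0 < ‖ξ‖ := lt_trans one_pos hn
      have h1 : gF φ ν ξ = φ ξ / (‖ξ‖ ^ 2 + ν ^ 2) := by
        rw [gF, Set.indicator_of_notMem hmem, sub_zero]
      have hφle : ‖φ ξ‖ ≤ C₃ / ‖ξ‖ := by
        rw [le_div_iff₀ hn0, mul_comm]
        simpa using SchwartzMap.norm_pow_mul_le_seminorm ℝ φ 1 ξ
      have h2 : ‖gF φ ν ξ‖ ≤ C₃ / ‖ξ‖ ^ 3 := by
        rw [h1, norm_div, Real.norm_eq_abs (‖ξ‖ ^ 2 + ν ^ 2), abs_of_pos hd]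
        calc ‖φ ξ‖ / (‖ξ‖ ^ 2 + ν ^ 2) ≤ (C₃ / ‖ξ‖) / ‖ξ‖ ^ 2 :=
              div_le_div₀ (by positivity) hφle (by positivity)
                (le_add_of_nonneg_right (by positivity))
          _ = C₃ / ‖ξ‖ ^ 3 := by
              rw [div_div]; ring_nf
      have h3 : C₃ / ‖ξ‖ ^ 3 ≤ 8 * C₃ * (1 + ‖ξ‖) ^ (-(3:ℝ)) := by
        have hr : (1 + ‖ξ‖) ^ (-(3:ℝ)) = ((1 + ‖ξ‖) ^ (3:ℕ))⁻¹ := by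
          rw [Real.rpow_neg (by positivity), ← Real.rpow_natCast]
          norm_num
        rw [hr, ← div_eq_mul_inv, div_le_div_iff₀ (by positivity) (by positivity)]
        have hcube : (1 + ‖ξ‖) ^ (3:ℕ) ≤ (2 * ‖ξ‖) ^ (3:ℕ) := by
          apply pow_le_pow_left₀ (by positivity)
          linarith
        calc C₃ * (1 + ‖ξ‖) ^ (3:ℕ) ≤ C₃ * (2 * ‖ξ‖) ^ (3:ℕ) :=
              mul_le_mul_of_nonneg_left hcube hC₃0
          _ = 8 * C₃ * ‖ξ‖ ^ 3 := by ring
      beta_reduce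
      rw [Set.indicator_of_notMem hmem, zero_add]
      exact h2.trans h3

/-- `1/(|ξ|² + ν²) - 2π log(1/ν) δ` converges in `S'(ℝ²)` as `ν → 0⁺`: for every
Schwartz function `φ` on `ℝ²`, the limit
`lim_{ν→0⁺} [ ∫ φ(ξ)/(|ξ|² + ν²) dξ - 2π log(1/ν) φ(0) ]` exists. -/
theorem resolvent_kernel_tempered_limit
    (φ : SchwartzMap (EuclideanSpace ℝ (Fin 2)) ℝ) :
    ∃ I : ℝ, Filter.Tendsto
      (fun ν : ℝ =>
        (∫ ξ, φ ξ / (‖ξ‖ ^ 2 + ν ^ 2)) - 2 * Real.pi * Real.log (1 / ν) * φ 0)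
      (nhdsWithin 0 (Set.Ioi 0)) (nhds I) := by
  obtain ⟨h, hint, hbound⟩ := gF_bound φ
  -- a.e. nonzero
  have hae : ∀ᵐ ξ : EuclideanSpace ℝ (Fin 2), ξ ≠ 0 := by
    rw [ae_iff]
    have : {ξ : EuclideanSpace ℝ (Fin 2) | ¬ ξ ≠ 0} = {0} := by
      ext ξ; simp
    rw [this]
    exact measure_singleton 0
  -- pointwise limit
  have hlim : ∀ᵐ ξ : EuclideanSpace ℝ (Fin 2),
      Tendsto (fun ν : ℝ => gF φ ν ξ) (nhdsWithin 0 (Set.Ioi 0)) (nhds (gF φ 0 ξ)) := by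
    refine hae.mono fun ξ hξ => ?_
    have hden : Tendsto (fun ν : ℝ => ‖ξ‖ ^ 2 + ν ^ 2) (nhds 0) (nhds (‖ξ‖ ^ 2)) := by
      have h' : Tendsto (fun ν : ℝ => ‖ξ‖ ^ 2 + ν ^ 2) (nhds 0) (nhds (‖ξ‖ ^ 2 + 0 ^ 2)) :=
        (continuous_const.add (continuous_pow 2)).tendsto 0
      simpa using h'
    have hne : ‖ξ‖ ^ 2 ≠ 0 := pow_ne_zero _ (norm_ne_zero_iff.2 hξ)
    have htend := (tendsto_const_nhds
      (x := φ ξ - Set.indicator (Metric.closedBall 0 1) (psiF φ) ξ)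
      (f := nhds (0:ℝ))).div hden hne
    have h0 : gF φ 0 ξ
        = (φ ξ - Set.indicator (Metric.closedBall 0 1) (psiF φ) ξ) / ‖ξ‖ ^ 2 := by
      rw [gF]
      norm_num
    rw [h0]
    have heq : ∀ ν : ℝ, (φ ξ - Set.indicator (Metric.closedBall 0 1) (psiF φ) ξ)
        / (‖ξ‖ ^ 2 + ν ^ 2) = gF φ ν ξ := fun ν => by rw [gF]
    exact (htend.congr heq).mono_left nhdsWithin_le_nhds
  -- dominated convergence
  have hDCT : Tendsto (fun ν : ℝ => ∫ ξ, gF φ ν ξ) (nhdsWithin 0 (Set.Ioi 0))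
      (nhds (∫ ξ, gF φ 0 ξ)) := by
    refine tendsto_integral_filter_of_dominated_convergence h
      (Eventually.of_forall (gF_meas φ)) ?_ hint hlim
    exact eventually_mem_nhdsWithin.mono fun ν hν => Eventually.of_forall (hbound ν hν)
  -- the second term tends to 0
  have hsec : Tendsto (fun ν : ℝ => φ 0 * Real.pi * Real.log (1 + ν ^ 2))
      (nhdsWithin 0 (Set.Ioi 0)) (nhds 0) := by
    have h1 : Tendsto (fun ν : ℝ => 1 + ν ^ 2) (nhds 0) (nhds 1) := by
      have h' : Tendsto (fun ν : ℝ => 1 + ν ^ 2) (nhds 0) (nhds (1 + 0 ^ 2)) :=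
        (continuous_const.add (continuous_pow 2)).tendsto 0
      simpa using h'
    have h2 : Tendsto (fun ν : ℝ => Real.log (1 + ν ^ 2)) (nhds 0) (nhds 0) := by
      have := (Real.continuousAt_log one_ne_zero).tendsto.comp h1
      simpa [Function.comp_def] using this
    have h3 := (tendsto_const_nhds (x := φ 0 * Real.pi) (f := nhds (0:ℝ))).mul h2
    rw [mul_zero] at h3
    exact h3.mono_left nhdsWithin_le_nhds
  -- key identity for ν > 0
  have key : ∀ ν : ℝ, ν ∈ Set.Ioi (0:ℝ) →
      (∫ ξ, φ ξ / (‖ξ‖ ^ 2 + ν ^ 2)) - 2 * Real.pi * Real.log (1 / ν) * φ 0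
        = (∫ ξ, gF φ ν ξ) + φ 0 * Real.pi * Real.log (1 + ν ^ 2) := by
    intro ν hν
    rw [gF_key φ ν hν]
    have hlog1 : Real.log (1 / ν) = - Real.log ν := by
      rw [one_div, Real.log_inv]
    have hlog2 : Real.log (ν ^ 2) = 2 * Real.log ν := by
      rw [Real.log_pow]
      norm_num
    rw [hlog1, hlog2]
    ring
  -- conclusion
  refine ⟨∫ ξ, gF φ 0 ξ, ?_⟩
  have htot := hDCT.add hsec
  rw [add_zero] at htot
  exact Tendsto.congr'
    (eventually_mem_nhdsWithin.mono fun ν hν => (key ν hν).symm) htot
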